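/- For any vector V ∈ ℝ^N, the condition ∑_{i=1}^N (D_p)_i w_i V_i = 0 (i.e. D_p^T W V = 0) holds if and only if the interpolation polynomial v(τ) = ∑_{i=1}^N V_i L_i(τ) has degree at most N−2. -/

import Mathlib

open Polynomial

/-- `lagL τ i` is the `i`-th Lagrange basis polynomial (of degree `N - 1`)
for the nodes `τ 0, …, τ (N-1)`, satisfying `(lagL τ i).eval (τ j) = δᵢⱼ`. -/
noncomputable def lagL {N : ℕ} (τ : Fin N → ℝ) (i : Fin N) : ℝ[X] :=
  Lagrange.basis Finset.univ τ i

/-- `lagLp τ` is the polynomial `L_p(x) = ∏ᵢ (x - τᵢ)`. -/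
noncomputable def lagLp {N : ℕ} (τ : Fin N → ℝ) : ℝ[X] :=
  ∏ i, (X - C (τ i))

/-- The differentiation matrix `D`, with `D i j = L_j'(τ i)`. -/
noncomputable def matD {N : ℕ} (τ : Fin N → ℝ) : Matrix (Fin N) (Fin N) ℝ :=
  fun i j => (derivative (lagL τ j)).eval (τ i)

/-- The vector `D_p`, with `(D_p) i = L_p'(τ i)`. -/
noncomputable def vecDp {N : ℕ} (τ : Fin N → ℝ) : Fin N → ℝ :=
  fun i => (derivative (lagLp τ)).eval (τ i)

/-- Columns `2, …, N+1` (in 1-based numbering) of the augmented differentiation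
matrix `D̃ = [D  D_p]`: column `j` (0-based, `j < N - 1`) is column `j + 1` of `D`,
and the last column is `D_p`. -/
noncomputable def matDtil2 {N : ℕ} (τ : Fin N → ℝ) : Matrix (Fin N) (Fin N) ℝ :=
  fun i j => if h : (j : ℕ) + 1 < N then matD τ i ⟨(j : ℕ) + 1, h⟩ else vecDp τ i

/-- The quadrature rule with nodes `τ` and weights `w` integrates exactly all
polynomials of degree at most `2 * N - 3` over `[-1, 1]`. -/
def IsQuadrature {N : ℕ} (τ : Fin N → ℝ) (w : Fin N → ℝ) : Prop :=
  ∀ p : ℝ[X], p.natDegree ≤ 2 * N - 3 →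
    ∑ i, w i * p.eval (τ i) = ∫ t in (-1 : ℝ)..1, p.eval t

/-- The integration matrix `A` with rows indexed (0-based) by `i : Fin (N-1)`
corresponding to the node `τ (i+1)`: `A i j = ∫_{-1}^{τ (i+1)} L_j(t) dt`. -/
noncomputable def matA {N : ℕ} (τ : Fin N → ℝ) : Matrix (Fin (N - 1)) (Fin N) ℝ :=
  fun i j => ∫ t in (-1 : ℝ)..(τ ⟨(i : ℕ) + 1, by have := i.isLt; omega⟩), (lagL τ j).eval t

/-- The row vector `A_p`, with `(A_p) j = (1/N) ∏_{k ≠ j} 1 / (τ j - τ k)`. -/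
noncomputable def rowAp {N : ℕ} (τ : Fin N → ℝ) : Fin N → ℝ :=
  fun j => (1 / (N : ℝ)) * ∏ k ∈ Finset.univ.erase j, (τ j - τ k)⁻¹

/-- The matrix `Ã` obtained by stacking `A` on top of the row vector `A_p`. -/
noncomputable def matAtil {N : ℕ} (τ : Fin N → ℝ) : Matrix (Fin N) (Fin N) ℝ :=
  fun i j => if h : (i : ℕ) + 1 < N then matA τ ⟨(i : ℕ), by omega⟩ j else rowAp τ j

/-- The adjoint integration matrix `A† = W⁻¹ Aᵀ W_{2:N}`, with columns indexed
(0-based) by `j : Fin (N-1)` corresponding to the node `τ (j+1)`. -/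
noncomputable def matAdag {N : ℕ} (τ : Fin N → ℝ) (w : Fin N → ℝ) :
    Matrix (Fin N) (Fin (N - 1)) ℝ :=
  fun i j => (w i)⁻¹ * matA τ j i * w ⟨(j : ℕ) + 1, by have := j.isLt; omega⟩

/-- `polyM τ k` is the Lagrange basis polynomial (of degree `N - 3`) for the
interior nodes `τ 1, …, τ (N-2)`, satisfying `(polyM τ k).eval (τ m) = δₖₘ`
for interior indices `m`. -/
noncomputable def polyM {N : ℕ} (τ : Fin N → ℝ) (k : Fin N) : ℝ[X] :=
  Lagrange.basis (Finset.univ.filter fun m : Fin N => 0 < (m : ℕ) ∧ (m : ℕ) < N - 1) τ k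

/-- The polynomial `λ(x) = ∑ᵢ (A† r)ᵢ Lᵢ(x)`. -/
noncomputable def lamP {N : ℕ} (τ : Fin N → ℝ) (w : Fin N → ℝ) (r : Fin (N - 1) → ℝ) : ℝ[X] :=
  ∑ i, C ((matAdag τ w).mulVec r i) * lagL τ i


/-- FTC for polynomials. -/
lemma polyFTC (p : Polynomial ℝ) (a b : ℝ) :
    ∫ t in a..b, (Polynomial.derivative p).eval t = p.eval b - p.eval a :=
  intervalIntegral.integral_eq_sub_of_hasDerivAt (fun x _ => p.hasDerivAt x)
    ((Polynomial.derivative p).continuous_aeval.intervalIntegrable a b)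

lemma natDegree_le_of_coeff_zero {p : Polynomial ℝ} {n : ℕ}
    (h1 : p.natDegree ≤ n + 1) (h2 : p.coeff (n + 1) = 0) : p.natDegree ≤ n := by
  by_contra h
  have hd : p.natDegree = n + 1 := le_antisymm h1 (by omega)
  have hl : p.leadingCoeff = 0 := by rw [Polynomial.leadingCoeff, hd]; exact h2
  rw [Polynomial.leadingCoeff_eq_zero] at hl
  simp [hl] at hd

/-- `D_pᵀ W V = 0` iff the interpolant `∑ᵢ Vᵢ Lᵢ` has degree at most `N - 2`. -/
theorem stmt2 (N : ℕ) (hN : 3 ≤ N) (τ : Fin N → ℝ) (hmono : StrictMono τ)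
    (h0 : τ ⟨0, by omega⟩ = -1) (h1 : τ ⟨N - 1, by omega⟩ = 1) (w : Fin N → ℝ) (hw : ∀ i, 0 < w i) (hquad : IsQuadrature τ w) :
    ∀ V : Fin N → ℝ,
      (∑ i, vecDp τ i * w i * V i = 0) ↔
        (∑ i, C (V i) * lagL τ i).natDegree ≤ N - 2 := by
  intro V
  have hτinj : Set.InjOn τ ↑(Finset.univ : Finset (Fin N)) :=
    fun p _ q _ h => hmono.injective h
  have hNR : (N : ℝ) ≠ 0 := Nat.cast_ne_zero.2 (by omega)
  have eNN : N - 2 + 1 = N - 1 := by omega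
  have hLp : lagLp τ = Lagrange.nodal Finset.univ τ := rfl
  set v : ℝ[X] := ∑ i, C (V i) * lagL τ i with hvdef
  have hvI : v = Lagrange.interpolate Finset.univ τ V := by
    rw [Lagrange.interpolate_apply]; rfl
  have hvdeg : v.natDegree ≤ N - 1 := by
    rcases eq_or_ne v 0 with h | h
    · simp [h]
    · have h2 := Lagrange.degree_interpolate_lt V hτinj
      rw [← hvI] at h2
      have h3 : v.natDegree < N := (Polynomial.natDegree_lt_iff_degree_lt h).2 (by simpa using h2)
      omega
  have hveval : ∀ i, v.eval (τ i) = V i := fun i => by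
    rw [hvI]; exact Lagrange.eval_interpolate_at_node V hτinj (Finset.mem_univ i)
  set a := v.coeff (N - 1) with ha
  have hLpdeg : (lagLp τ).natDegree = N := by
    rw [hLp, Lagrange.natDegree_nodal]; simp
  have hLpmonic : (lagLp τ).Monic := hLp ▸ Lagrange.nodal_monic
  have hcoeffN : (lagLp τ).coeff N = 1 := by
    have := hLpmonic.coeff_natDegree; rwa [hLpdeg] at this
  have hdLpcoeff : (derivative (lagLp τ)).coeff (N - 1) = N := by
    rw [Polynomial.coeff_derivative,
      show N - 1 + 1 = N by omega, hcoeffN, one_mul,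
      Nat.cast_sub (show 1 ≤ N by omega)]
    push_cast; ring
  have hdLpdeg : (derivative (lagLp τ)).natDegree ≤ N - 1 := by
    have := Polynomial.natDegree_derivative_le (lagLp τ); omega
  set u : ℝ[X] := v - C (a / N) * derivative (lagLp τ) with hu
  have hudeg1 : u.natDegree ≤ N - 1 :=
    le_trans (Polynomial.natDegree_sub_le _ _)
      (max_le hvdeg (le_trans (Polynomial.natDegree_C_mul_le _ _) hdLpdeg))
  have hucoeff : u.coeff (N - 1) = 0 := by
    rw [hu, Polynomial.coeff_sub, Polynomial.coeff_C_mul, hdLpcoeff, ← ha]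
    field_simp
    ring
  have hudeg : u.natDegree ≤ N - 2 :=
    natDegree_le_of_coeff_zero (by rw [eNN]; exact hudeg1) (by rw [eNN]; exact hucoeff)
  have hueval : ∀ i, u.eval (τ i) = V i - a / N * vecDp τ i := fun i => by
    simp [hu, hveval i, vecDp]
  have hdudeg : (derivative u).natDegree ≤ N - 3 :=
    le_trans (Polynomial.natDegree_derivative_le u) (by omega)
  have hLp0 : ∀ i, (lagLp τ).eval (τ i) = 0 := fun i => by
    rw [hLp]; exact Lagrange.eval_nodal_at_node (Finset.mem_univ i)
  have hq1 : ∑ i, w i * ((derivative (lagLp τ)) * u).eval (τ i)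
      = ∫ t in (-1:ℝ)..1, ((derivative (lagLp τ)) * u).eval t :=
    hquad _ (le_trans (Polynomial.natDegree_mul_le) (by omega))
  have hq2 : ∑ i, w i * ((lagLp τ) * derivative u).eval (τ i)
      = ∫ t in (-1:ℝ)..1, ((lagLp τ) * derivative u).eval t :=
    hquad _ (le_trans (Polynomial.natDegree_mul_le) (by omega))
  have hq2lhs : ∑ i, w i * ((lagLp τ) * derivative u).eval (τ i) = 0 := by
    simp [Polynomial.eval_mul, hLp0]
  have hftc : ∫ t in (-1:ℝ)..1, (derivative ((lagLp τ) * u)).eval t = 0 := by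
    rw [polyFTC]
    have e1 : (lagLp τ).eval 1 = 0 := by rw [← h1]; exact hLp0 _
    have e2 : (lagLp τ).eval (-1) = 0 := by rw [← h0]; exact hLp0 _
    simp [e1, e2]
  have hsplit : (∫ t in (-1:ℝ)..1, ((derivative (lagLp τ)) * u).eval t)
      + (∫ t in (-1:ℝ)..1, ((lagLp τ) * derivative u).eval t) = 0 := by
    rw [← intervalIntegral.integral_add
      ((Polynomial.continuous _).intervalIntegrable _ _)
      ((Polynomial.continuous _).intervalIntegrable _ _), ← hftc]
    congr 1
    ext t
    simp [Polynomial.derivative_mul]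
  have key : ∑ i, w i * ((derivative (lagLp τ)) * u).eval (τ i) = 0 := by
    rw [hq1]; linarith [hsplit, hq2, hq2lhs]
  have expand : ∑ i, w i * ((derivative (lagLp τ)) * u).eval (τ i)
      = (∑ i, vecDp τ i * w i * V i) - (a / N) * ∑ i, w i * (vecDp τ i)^2 := by
    rw [Finset.mul_sum, ← Finset.sum_sub_distrib]
    refine Finset.sum_congr rfl fun i _ => ?_
    rw [Polynomial.eval_mul, hueval i]
    show w i * (vecDp τ i * _) = _
    ring
  have hDp : ∀ i, vecDp τ i ≠ 0 := fun i => by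
    have hv2 : vecDp τ i = ∏ j ∈ Finset.univ.erase i, (τ i - τ j) := by
      show (derivative (lagLp τ)).eval (τ i) = _
      rw [hLp, Lagrange.eval_nodal_derivative_eval_node_eq (Finset.mem_univ i),
        Lagrange.eval_nodal]
    rw [hv2]
    refine Finset.prod_ne_zero_iff.2 fun j hj => ?_
    have hji := (Finset.mem_erase.1 hj).1
    exact sub_ne_zero_of_ne fun h => hji (hmono.injective h.symm)
  have hS : 0 < ∑ i, w i * (vecDp τ i)^2 := by
    refine Finset.sum_pos' (fun i _ => ?_) ⟨⟨0, by omega⟩, Finset.mem_univ _, ?_⟩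
    · exact mul_nonneg (hw i).le (sq_nonneg _)
    · exact mul_pos (hw _) (pow_two_pos_of_ne_zero (hDp _))
  have hmain : ∑ i, vecDp τ i * w i * V i = (a / N) * ∑ i, w i * vecDp τ i ^ 2 := by
    linarith [key, expand]
  constructor
  · intro h
    have h2 : a / N * ∑ i, w i * vecDp τ i ^ 2 = 0 := by linarith
    have h3 : a / N = 0 := by
      rcases mul_eq_zero.1 h2 with h3 | h3
      · exact h3
      · exact absurd h3 (ne_of_gt hS)
    have ha0 : a = 0 := by
      rcases div_eq_zero_iff.1 h3 with h4 | h4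
      · exact h4
      · exact absurd h4 hNR
    exact natDegree_le_of_coeff_zero (by rw [eNN]; exact hvdeg) (by rw [eNN]; exact ha0)
  · intro h
    have ha0 : a = 0 := Polynomial.coeff_eq_zero_of_natDegree_lt (by omega)
    rw [hmain, ha0]
    simp
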